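/- The set of real 36×36 matrices Λ, indexed by the two-qubit configurations C = (s₁,α,s₂,β) ∈ ({+1,−1}×{x,y,z})², satisfying both (i) Σ_{C'} Λ_{C,C'} • P_{C'} = 0 (the zero 4×4 complex matrix) for every C, and (ii) Σ_C Λ_{C,C'} = 0 for every C', is an ℝ-linear subspace of dimension exactly 700. -/

import Mathlib

open Matrix Kronecker Finset
open scoped Classical

noncomputable section
set_option maxHeartbeats 1000000
set_option synthInstance.maxHeartbeats 1000000

/-- The Pauli matrices σ_x, σ_y, σ_z, indexed by `0, 1, 2 : Fin 3`. -/
def σp : Fin 3 → Matrix (Fin 2) (Fin 2) ℂ :=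
  ![!![0, 1; 1, 0], !![0, -Complex.I; Complex.I, 0], !![1, 0; 0, -1]]

/-- The sign values `+1, −1`, indexed by `Fin 2`. -/
def sgn : Fin 2 → ℝ := ![1, -1]

/-- The spin projector `P_{s,α} = (1/2)(1 + s • σ_α)`. -/
def Pspin (s : ℝ) (α : Fin 3) : Matrix (Fin 2) (Fin 2) ℂ :=
  (2 : ℂ)⁻¹ • (1 + (s : ℂ) • σp α)

/-- A single-qubit classical configuration: a sign and an axis. -/
abbrev Conf1 := Fin 2 × Fin 3

/-- The projector attached to a single-qubit configuration. -/
def Pc (c : Conf1) : Matrix (Fin 2) (Fin 2) ℂ := Pspin (sgn c.1) c.2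

/-- A two-qubit classical configuration. -/
abbrev Conf2 := Conf1 × Conf1

/-- The projector attached to a two-qubit configuration (Kronecker product). -/
def Pc2 (C : Conf2) : Matrix (Fin 2 × Fin 2) (Fin 2 × Fin 2) ℂ :=
  Pc C.1 ⊗ₖ Pc C.2

/-- Dual dissipative channel `𝒟[A](X) = A† X A − (1/2)(A†A X + X A†A)`. -/
def Dcal {n : Type*} [Fintype n] (A X : Matrix n n ℂ) : Matrix n n ℂ :=
  Aᴴ * X * A - (2 : ℂ)⁻¹ • (Aᴴ * A * X + X * (Aᴴ * A))

def τ : Fin 4 → Matrix (Fin 2) (Fin 2) ℂ := ![1, σp 0, σp 1, σp 2]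
def B (p : Fin 4 × Fin 4) : Matrix (Fin 2 × Fin 2) (Fin 2 × Fin 2) ℂ := τ p.1 ⊗ₖ τ p.2

lemma Pc_eq (c : Conf1) :
    Pc c = (2⁻¹ : ℝ) • τ 0 + (sgn c.1 * 2⁻¹ : ℝ) • τ c.2.succ := by
  have hτ : τ c.2.succ = σp c.2 := by
    have h : ∀ β : Fin 3, τ β.succ = σp β := by intro β; fin_cases β <;> rfl
    exact h c.2
  rw [hτ]
  show (2 : ℂ)⁻¹ • (1 + ((sgn c.1 : ℝ) : ℂ) • σp c.2) = _
  ext i j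
  simp [Matrix.smul_apply, Matrix.add_apply, Complex.real_smul, τ]
  ring

lemma tau_comb (i : Fin 4) :
    ∃ (e : Fin 2 → ℝ) (α : Fin 3), τ i = e 0 • Pc (0, α) + e 1 • Pc (1, α) := by
  by_cases h0 : i = 0
  · refine ⟨![1, 1], 0, ?_⟩
    subst h0
    simp only [Pc_eq]
    simp [sgn]
    module
  · obtain ⟨β, rfl⟩ : ∃ β : Fin 3, i = β.succ := by
      fin_cases i
      · exact absurd rfl h0
      · exact ⟨0, rfl⟩
      · exact ⟨1, rfl⟩
      · exact ⟨2, rfl⟩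
    refine ⟨![1, -1], β, ?_⟩
    simp only [Pc_eq]
    simp [sgn]
    module


lemma B_indep : LinearIndependent ℝ B := by
  rw [Fintype.linearIndependent_iff]
  intro g hg
  have h := fun (p q : Fin 2 × Fin 2) => congrFun (congrFun hg p) q
  have e1 := h (0,0) (0,0)
  have e2 := h (0,0) (0,1)
  have e3 := h (0,1) (0,0)
  have e4 := h (0,1) (0,1)
  have e5 := h (0,0) (1,0)
  have e6 := h (0,0) (1,1)
  have e7 := h (0,1) (1,0)
  have e8 := h (0,1) (1,1)
  have e9 := h (1,0) (0,0)
  have e10 := h (1,0) (0,1)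
  have e11 := h (1,1) (0,0)
  have e12 := h (1,1) (0,1)
  have e13 := h (1,0) (1,0)
  have e14 := h (1,0) (1,1)
  have e15 := h (1,1) (1,0)
  have e16 := h (1,1) (1,1)
  simp only [Finset.sum_apply, Matrix.sum_apply, Matrix.smul_apply, B, kroneckerMap_apply,
    Fintype.sum_prod_type, Fin.sum_univ_four, τ, σp, Matrix.cons_val_zero, Matrix.cons_val_one,
    Matrix.head_cons, Matrix.cons_val', Matrix.empty_val', Matrix.cons_val_fin_one,
    Matrix.one_apply, Matrix.of_apply, Matrix.zero_apply, Complex.real_smul,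
    Matrix.head_fin_const, Matrix.cons_val_succ, Matrix.cons_val] at e1 e2 e3 e4 e5 e6 e7 e8 e9 e10 e11 e12 e13 e14 e15 e16
  norm_num [Complex.ext_iff] at e1 e2 e3 e4 e5 e6 e7 e8 e9 e10 e11 e12 e13 e14 e15 e16
  have k00 : g 0 = 0 := by show g (0,0) = 0; linarith [e1, e4, e13, e16]
  have k01 : g (0,1) = 0 := by linarith [e2.1, e3.1, e14.1, e15.1]
  have k02 : g (0,2) = 0 := by linarith [e2.2, e3.2, e14.2, e15.2]
  have k03 : g (0,3) = 0 := by linarith [e1, e4, e13, e16]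
  have k10 : g (1,0) = 0 := by linarith [e5.1, e8.1, e9.1, e12.1]
  have k11 : g 1 = 0 := by show g (1,1) = 0; linarith [e6.1, e7.1, e10.1, e11.1]
  have k12 : g (1,2) = 0 := by linarith [e6.2, e7.2, e10.2, e11.2]
  have k13 : g (1,3) = 0 := by linarith [e5.1, e8.1, e9.1, e12.1]
  have k20 : g (2,0) = 0 := by linarith [e5.2, e8.2, e9.2, e12.2]
  have k21 : g (2,1) = 0 := by linarith [e6.2, e7.2, e10.2, e11.2]
  have k22 : g (2,2) = 0 := by linarith [e6.1, e7.1, e10.1, e11.1]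
  have k23 : g (2,3) = 0 := by linarith [e5.2, e8.2, e9.2, e12.2]
  have k30 : g (3,0) = 0 := by linarith [e1, e4, e13, e16]
  have k31 : g (3,1) = 0 := by linarith [e2.1, e3.1, e14.1, e15.1]
  have k32 : g (3,2) = 0 := by linarith [e2.2, e3.2, e14.2, e15.2]
  have k33 : g (3,3) = 0 := by linarith [e1, e4, e13, e16]
  intro i
  fin_cases i <;> assumption

def phi : (Conf2 → ℝ) →ₗ[ℝ] Matrix (Fin 2 × Fin 2) (Fin 2 × Fin 2) ℂ :=
  Fintype.linearCombination ℝ Pc2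

lemma kron_expand (A A' : Matrix (Fin 2) (Fin 2) ℂ) (B' B'' : Matrix (Fin 2) (Fin 2) ℂ)
    (a b c d : ℝ) :
    (a • A + b • A') ⊗ₖ (c • B' + d • B'') =
      (a*c) • (A ⊗ₖ B') + (a*d) • (A ⊗ₖ B'') + (b*c) • (A' ⊗ₖ B') + (b*d) • (A' ⊗ₖ B'') := by
  simp only [Matrix.add_kronecker, Matrix.kronecker_add, Matrix.smul_kronecker,
    Matrix.kronecker_smul]
  module

lemma span_eq :
    Submodule.span ℝ (Set.range Pc2) = Submodule.span ℝ (Set.range B) := by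
  apply le_antisymm
  · rw [Submodule.span_le]
    rintro _ ⟨C, rfl⟩
    have hC : Pc2 C = Pc C.1 ⊗ₖ Pc C.2 := rfl
    rw [hC, Pc_eq C.1, Pc_eq C.2, kron_expand]
    have m : ∀ p : Fin 4 × Fin 4, τ p.1 ⊗ₖ τ p.2 ∈ Submodule.span ℝ (Set.range B) :=
      fun p => Submodule.subset_span ⟨p, rfl⟩
    exact Submodule.add_mem _ (Submodule.add_mem _ (Submodule.add_mem _
      (Submodule.smul_mem _ _ (m (0, 0))) (Submodule.smul_mem _ _ (m (0, _))))
      (Submodule.smul_mem _ _ (m (_, 0)))) (Submodule.smul_mem _ _ (m (_, _)))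
  · rw [Submodule.span_le]
    rintro _ ⟨⟨i, j⟩, rfl⟩
    obtain ⟨e, α, he⟩ := tau_comb i
    obtain ⟨f, β, hf⟩ := tau_comb j
    have hB : B (i, j) = τ i ⊗ₖ τ j := rfl
    have he' : τ i = e 0 • Pc (0, α) + e 1 • Pc (1, α) := he
    have hf' : τ j = f 0 • Pc (0, β) + f 1 • Pc (1, β) := hf
    rw [hB, he', hf', kron_expand]
    have m : ∀ c d : Conf1, Pc c ⊗ₖ Pc d ∈ Submodule.span ℝ (Set.range Pc2) :=
      fun c d => Submodule.subset_span ⟨(c, d), rfl⟩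
    exact Submodule.add_mem _ (Submodule.add_mem _ (Submodule.add_mem _
      (Submodule.smul_mem _ _ (m _ _)) (Submodule.smul_mem _ _ (m _ _)))
      (Submodule.smul_mem _ _ (m _ _))) (Submodule.smul_mem _ _ (m _ _))

lemma finrank_range_phi : Module.finrank ℝ (LinearMap.range phi) = 16 := by
  rw [phi, Fintype.range_linearCombination, span_eq, finrank_span_eq_card B_indep]
  simp

abbrev K : Submodule ℝ (Conf2 → ℝ) := LinearMap.ker phi

lemma finrank_K : Module.finrank ℝ (LinearMap.ker phi) = 20 := by
  have h := LinearMap.finrank_range_add_finrank_ker phi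
  rw [finrank_range_phi, Module.finrank_pi] at h
  have hc : Fintype.card Conf2 = 36 := by simp
  rw [hc] at h
  omega

def Ψ : (Conf2 → K) →ₗ[ℝ] K where
  toFun f := ∑ C, f C
  map_add' f g := by simp [Finset.sum_add_distrib]
  map_smul' r f := by simp [Finset.smul_sum]

lemma Ψ_surj : Function.Surjective Ψ := by
  intro v
  refine ⟨Pi.single (M := fun _ : Conf2 => K) (((0 : Fin 2), (0 : Fin 3)),
    ((0 : Fin 2), (0 : Fin 3))) v, ?_⟩
  show (∑ C, Pi.single (M := fun _ : Conf2 => K) _ v C) = v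
  simp

lemma finrank_kerΨ : Module.finrank ℝ (LinearMap.ker Ψ) = 700 := by
  have h := LinearMap.finrank_range_add_finrank_ker Ψ
  rw [LinearMap.range_eq_top.mpr Ψ_surj, finrank_top, finrank_K,
    Module.finrank_pi_fintype, Finset.sum_const, finrank_K] at h
  have hc : Fintype.card Conf2 = 36 := by simp
  rw [Finset.card_univ, hc, smul_eq_mul] at h
  omega

def Sgauge : Submodule ℝ (Matrix Conf2 Conf2 ℝ) where
  carrier := {Λ | (∀ C : Conf2, ∑ C' : Conf2, Λ C C' • Pc2 C'
      = (0 : Matrix (Fin 2 × Fin 2) (Fin 2 × Fin 2) ℂ)) ∧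
    (∀ C' : Conf2, ∑ C : Conf2, Λ C C' = 0)}
  add_mem' := by
    rintro Λ Λ' ⟨h1, h2⟩ ⟨h1', h2'⟩
    constructor
    · intro C
      have h : ∀ C', (Λ + Λ') C C' • Pc2 C' = Λ C C' • Pc2 C' + Λ' C C' • Pc2 C' := by
        intro C'; rw [Matrix.add_apply, add_smul]
      simp only [h, Finset.sum_add_distrib, h1 C, h1' C, add_zero]
    · intro C'
      simp only [Matrix.add_apply, Finset.sum_add_distrib, h2 C', h2' C', add_zero]
  zero_mem' := by
    constructor <;> intro C <;> simp
  smul_mem' := by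
    rintro r Λ ⟨h1, h2⟩
    constructor
    · intro C
      have h : ∀ C', (r • Λ) C C' • Pc2 C' = r • (Λ C C' • Pc2 C') := by
        intro C'; rw [Matrix.smul_apply, smul_eq_mul, mul_smul]
      simp only [h, ← Finset.smul_sum, h1 C, smul_zero]
    · intro C'
      simp only [Matrix.smul_apply, smul_eq_mul, ← Finset.mul_sum, h2 C', mul_zero]

lemma mem_K_of {Λ : Matrix Conf2 Conf2 ℝ}
    (h : ∀ C : Conf2, ∑ C' : Conf2, Λ C C' • Pc2 C' = 0) (C : Conf2) : Λ C ∈ K :=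
  LinearMap.mem_ker.mpr (h C)

def gaugeEquiv : Sgauge ≃ₗ[ℝ] LinearMap.ker Ψ where
  toFun Λh :=
    ⟨fun C => ⟨Λh.1 C, mem_K_of Λh.2.1 C⟩, by
      rw [LinearMap.mem_ker]
      apply Subtype.ext
      show ((∑ C, (⟨Λh.1 C, mem_K_of Λh.2.1 C⟩ : K) : K) : Conf2 → ℝ) = 0
      rw [Submodule.coe_sum]
      funext C'
      exact (Finset.sum_apply C' Finset.univ (fun C => (Λh.1 C : Conf2 → ℝ))).trans (Λh.2.2 C')⟩
  invFun f :=
    ⟨fun C C' => ((f.1 C : Conf2 → ℝ) C'), by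
      refine ⟨fun C => (f.1 C).2, fun C' => ?_⟩
      have h0 : ((Ψ f.1 : K) : Conf2 → ℝ) = 0 := by
        rw [LinearMap.mem_ker.mp f.2]; rfl
      have h1 : (∑ C, ((f.1 C : K) : Conf2 → ℝ)) C' = 0 := by
        rw [← Submodule.coe_sum]
        show ((Ψ f.1 : K) : Conf2 → ℝ) C' = 0
        rw [h0]; rfl
      simpa [Finset.sum_apply] using h1⟩
  left_inv Λh := rfl
  right_inv f := rfl
  map_add' x y := rfl
  map_smul' r x := rfl

/-- The gauge transformations of the two-qubit Markov-matrix representation —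
the real 36×36 matrices `Λ` with `Σ_{C'} Λ_{C,C'} • P_{C'} = 0` for every `C` and
`Σ_C Λ_{C,C'} = 0` for every `C'` — form an `ℝ`-linear subspace of dimension 700. -/
theorem gauge_space_two_qubit_dim_seven_hundred :
    ∃ S : Submodule ℝ (Matrix Conf2 Conf2 ℝ),
      (∀ Λ : Matrix Conf2 Conf2 ℝ, Λ ∈ S ↔
        ((∀ C : Conf2, ∑ C' : Conf2, Λ C C' • Pc2 C'
            = (0 : Matrix (Fin 2 × Fin 2) (Fin 2 × Fin 2) ℂ)) ∧
         (∀ C' : Conf2, ∑ C : Conf2, Λ C C' = 0))) ∧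
      Module.finrank ℝ S = 700 := by
  refine ⟨Sgauge, fun Λ => Iff.rfl, ?_⟩
  exact gaugeEquiv.finrank_eq.trans finrank_kerΨ
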